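/- Let K be a differential field of characteristic zero and t a primitive generator over K. If f ∈ K(t) is both t-proper and a logarithmic derivative (f = g′/g for some nonzero g ∈ K(t)), then f is t-simple, i.e., its denominator is squarefree. -/

import Mathlib

set_option maxHeartbeats 1000000

open Polynomial

namespace PLDS

variable {F : Type*} [Field F] {δ : F → F} {K : Subfield F}

theorem d0 (hδadd : ∀ a b : F, δ (a + b) = δ a + δ b) : δ 0 = 0 := by
  have h := hδadd 0 0
  rw [add_zero] at h
  exact left_eq_add.mp h

theorem d1 (hδmul : ∀ a b : F, δ (a * b) = δ a * b + a * δ b) : δ 1 = 0 := by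
  have h := hδmul 1 1
  rw [mul_one, one_mul, mul_one] at h
  exact left_eq_add.mp h

theorem dpow (hδmul : ∀ a b : F, δ (a * b) = δ a * b + a * δ b) (x : F) :
    ∀ n : ℕ, δ (x ^ (n + 1)) = (n + 1) * x ^ n * δ x := by
  intro n
  induction n with
  | zero => simp
  | succ n ih =>
    have h := hδmul x (x ^ (n + 1))
    rw [← pow_succ'] at h
    rw [h, ih]
    push_cast
    ring

/-- the derivation restricted to `K`. -/
def dK (hK : ∀ a ∈ K, δ a ∈ K) : ↥K → ↥K := fun a => ⟨δ ↑a, hK ↑a a.2⟩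

theorem dK_zero (hδadd : ∀ a b : F, δ (a + b) = δ a + δ b) (hK : ∀ a ∈ K, δ a ∈ K) :
    dK hK 0 = 0 := Subtype.ext (by simpa [dK] using d0 hδadd)

theorem dK_one (hδmul : ∀ a b : F, δ (a * b) = δ a * b + a * δ b) (hK : ∀ a ∈ K, δ a ∈ K) :
    dK hK 1 = 0 := Subtype.ext (by simpa [dK] using d1 hδmul)

/-- the induced derivation on `K[X]` when `δ t ∈ K`. -/
noncomputable def D (hδadd : ∀ a b : F, δ (a + b) = δ a + δ b) (hK : ∀ a ∈ K, δ a ∈ K) (τ : ↥K) :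
    Polynomial ↥K → Polynomial ↥K := fun p =>
  derivative p * C τ + ⟨⟨p.toFinsupp.coeff.mapRange (dK hK) (dK_zero hδadd hK)⟩⟩

theorem coeff_D (hδadd : ∀ a b : F, δ (a + b) = δ a + δ b) (hK : ∀ a ∈ K, δ a ∈ K) (τ : ↥K)
    (p : Polynomial ↥K) (n : ℕ) :
    (D hδadd hK τ p).coeff n = (derivative p).coeff n * τ + dK hK (p.coeff n) := by
  rw [D, coeff_add, coeff_mul_C]
  rfl

theorem D_add (hδadd : ∀ a b : F, δ (a + b) = δ a + δ b) (hK : ∀ a ∈ K, δ a ∈ K) (τ : ↥K)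
    (p q : Polynomial ↥K) :
    D hδadd hK τ (p + q) = D hδadd hK τ p + D hδadd hK τ q := by
  ext n
  simp only [coeff_D, coeff_add, derivative_add]
  have : dK hK (p.coeff n + q.coeff n) = dK hK (p.coeff n) + dK hK (q.coeff n) :=
    Subtype.ext (by simpa [dK] using hδadd _ _)
  rw [this]
  ring

theorem D_monomial (hδadd : ∀ a b : F, δ (a + b) = δ a + δ b) (hK : ∀ a ∈ K, δ a ∈ K) (τ : ↥K)
    (n : ℕ) (a : ↥K) :
    D hδadd hK τ (monomial n a) = derivative (monomial n a) * C τ + monomial n (dK hK a) := by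
  rw [D]
  congr 1
  rw [toFinsupp_monomial, AddMonoidAlgebra.coeff_single, Finsupp.mapRange_single,
    AddMonoidAlgebra.ofCoeff_single, ofFinsupp_single]



theorem aeval_ne_zero {t : F} (htr : Transcendental ↥K t) {p : Polynomial ↥K} (hp : p ≠ 0) :
    Polynomial.aeval t p ≠ 0 := by
  intro h
  apply hp
  have h1 := transcendental_iff_injective.mp htr
  exact h1 (by simpa using h)

theorem aeval_D (hδadd : ∀ a b : F, δ (a + b) = δ a + δ b)
    (hδmul : ∀ a b : F, δ (a * b) = δ a * b + a * δ b)
    (hK : ∀ a ∈ K, δ a ∈ K) {t : F} (ht : δ t ∈ K)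
    (p : Polynomial ↥K) :
    aeval t (D hδadd hK ⟨δ t, ht⟩ p) = δ (aeval t p) := by
  induction p using Polynomial.induction_on' with
  | add p q hp hq =>
    rw [D_add, map_add, hp, hq, map_add, hδadd]
  | monomial n a =>
    rw [D_monomial, map_add, map_mul, aeval_C, aeval_monomial, aeval_monomial, derivative_monomial]
    show (aeval t) ((monomial (n-1)) (a * (n:↥K))) * δ t + δ (↑a) * t ^ n = δ (↑a * t ^ n)
    rw [hδmul]
    cases n with
    | zero => simp [d1 hδmul]
    | succ m =>
      rw [aeval_monomial, dpow hδmul, map_mul, map_natCast]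
      have halg : (algebraMap ↥K F) a = (a : F) := rfl
      rw [halg]
      simp only [Nat.add_sub_cancel]
      push_cast
      ring

theorem aeval_ne {t : F} (htr : Transcendental ↥K t) {p : Polynomial ↥K} (hp : p ≠ 0) :
    Polynomial.aeval t p ≠ 0 := by
  intro h
  apply hp
  exact (transcendental_iff_injective.mp htr) (by simpa using h)

theorem D_mul (hδadd : ∀ a b : F, δ (a + b) = δ a + δ b)
    (hδmul : ∀ a b : F, δ (a * b) = δ a * b + a * δ b)
    (hK : ∀ a ∈ K, δ a ∈ K) {t : F} (htr : Transcendental ↥K t) (ht : δ t ∈ K)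
    (p q : Polynomial ↥K) :
    D hδadd hK ⟨δ t, ht⟩ (p * q) =
      D hδadd hK ⟨δ t, ht⟩ p * q + p * D hδadd hK ⟨δ t, ht⟩ q := by
  apply transcendental_iff_injective.mp htr
  rw [map_add, map_mul, map_mul, aeval_D hδadd hδmul hK ht, aeval_D hδadd hδmul hK ht,
    aeval_D hδadd hδmul hK ht, map_mul, hδmul]

theorem degree_D_lt (hδadd : ∀ a b : F, δ (a + b) = δ a + δ b)
    (hδmul : ∀ a b : F, δ (a * b) = δ a * b + a * δ b)
    (hK : ∀ a ∈ K, δ a ∈ K) (τ : ↥K)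
    {M : Polynomial ↥K} (hM : M.Monic) :
    (D hδadd hK τ M).degree < M.degree := by
  rw [degree_eq_natDegree hM.ne_zero, degree_lt_iff_coeff_zero]
  intro m hm
  have hm' : M.natDegree ≤ m := by exact_mod_cast hm
  rw [coeff_D]
  have h1 : (derivative M).coeff m = 0 := by
    rw [coeff_derivative]
    rw [coeff_eq_zero_of_natDegree_lt (by omega)]
    ring
  have h2 : dK hK (M.coeff m) = 0 := by
    rcases eq_or_lt_of_le hm' with h | h
    · rw [← h, hM.coeff_natDegree]
      exact dK_one hδmul hK
    · rw [coeff_eq_zero_of_natDegree_lt h]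
      exact dK_zero hδadd hK
  rw [h1, h2, zero_mul, zero_add]

theorem main_lemma {k : Type*} [Field k] (D' : Polynomial k → Polynomial k)
    (hDmul : ∀ p q : Polynomial k, D' (p * q) = D' p * q + p * D' q)
    (hDdeg : ∀ {M : Polynomial k}, M.Monic → (D' M).degree < M.degree) :
    ∀ n : ℕ, ∀ M : Polynomial k, M.Monic → M.natDegree ≤ n →
    ∃ s r : Polynomial k, r ≠ 0 ∧ Squarefree r ∧ s.degree < r.degree ∧
      D' M * r = M * s := by
  intro n
  induction n with
  | zero =>
    intro M hM hd
    have hM1 : M = 1 := hM.natDegree_eq_zero.mp (Nat.le_zero.mp hd)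
    subst hM1
    refine ⟨0, 1, (by simp : (1 : Polynomial k) ≠ 0), squarefree_one, ?_, ?_⟩
    · rw [degree_zero, degree_one]
      exact WithBot.bot_lt_coe 0
    · have hD : D' 1 = 0 := by
        have h := hDdeg monic_one
        rw [degree_one] at h
        exact degree_eq_bot.mp (Nat.WithBot.lt_zero_iff.mp h)
      rw [hD]
      simp
  | succ n ih =>
    intro M hM hd
    by_cases hle : M.natDegree ≤ n
    · exact ih M hM hle
    have hMne : M ≠ 0 := hM.ne_zero
    have hnu : ¬ IsUnit M := fun h => hle (by rw [natDegree_eq_zero_of_isUnit h]; omega)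
    obtain ⟨i, hi, hidvd⟩ := WfDvdMonoid.exists_irreducible_factor hnu hMne
    have hine : i ≠ 0 := hi.ne_zero
    obtain ⟨p, hp⟩ : ∃ p : Polynomial k, p = i * C (i.leadingCoeff)⁻¹ := ⟨_, rfl⟩
    have hpm : p.Monic := hp ▸ monic_mul_leadingCoeff_inv hine
    have hCu : IsUnit (C (i.leadingCoeff)⁻¹) :=
      isUnit_C.mpr (isUnit_iff_ne_zero.mpr (inv_ne_zero (leadingCoeff_ne_zero.mpr hine)))
    have hassoc : Associated i p := hp ▸ associated_mul_unit_right i _ hCu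
    have hpirr : Irreducible p := hassoc.irreducible hi
    obtain ⟨N, hMN⟩ : p ∣ M := (hassoc.symm.dvd).trans hidvd
    have hNm : N.Monic := hpm.of_mul_monic_left (hMN ▸ hM)
    have hN0 : N ≠ 0 := hNm.ne_zero
    have hpdeg : 0 < p.natDegree := hpirr.natDegree_pos
    have hNdeg : N.natDegree ≤ n := by
      have hnd : M.natDegree = p.natDegree + N.natDegree := by
        rw [hMN, natDegree_mul hpm.ne_zero hN0]
      omega
    obtain ⟨s, r, hr0, hsq, hsdeg, heq⟩ := ih N hNm hNdeg
    have hD : D' M = D' p * N + p * D' N := by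
      rw [hMN, hDmul]
    by_cases hpr : p ∣ r
    · obtain ⟨r₂, hr₂⟩ := hpr
      have hr₂0 : r₂ ≠ 0 := by
        rintro rfl
        rw [mul_zero] at hr₂
        exact hr0 hr₂
      refine ⟨D' p * r₂ + s, r, hr0, hsq, ?_, ?_⟩
      · apply lt_of_le_of_lt (degree_add_le _ _)
        apply max_lt _ hsdeg
        rw [degree_mul]
        calc (D' p).degree + r₂.degree
            < p.degree + r₂.degree :=
              WithBot.add_lt_add_right (fun h => hr₂0 (degree_eq_bot.mp h)) (hDdeg hpm)
          _ = r.degree := by rw [hr₂, degree_mul]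
      · have heq' : D' N * (p * r₂) = N * s := by rw [← hr₂]; exact heq
        rw [hD, hMN, hr₂]
        linear_combination p * heq'
    · refine ⟨D' p * r + p * s, p * r,
        mul_ne_zero hpm.ne_zero hr0, ?_, ?_, ?_⟩
      · exact squarefree_mul_iff.mpr
          ⟨hpirr.isRelPrime_iff_not_dvd.mpr hpr, hpirr.squarefree, hsq⟩
      · apply lt_of_le_of_lt (degree_add_le _ _)
        rw [degree_mul, degree_mul, degree_mul]
        apply max_lt
        · exact WithBot.add_lt_add_right (fun h => hr0 (degree_eq_bot.mp h)) (hDdeg hpm)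
        · exact WithBot.add_lt_add_left (fun h => hpm.ne_zero (degree_eq_bot.mp h)) hsdeg
      · rw [hD, hMN]
        linear_combination (p^2) * heq

theorem d_div (hδmul : ∀ a b : F, δ (a * b) = δ a * b + a * δ b)
    (x y : F) (hy : y ≠ 0) : δ (x / y) = (δ x * y - x * δ y) / y ^ 2 := by
  have h := hδmul (x / y) y
  rw [div_mul_cancel₀ x hy] at h
  have h2 : δ x * y = δ (x / y) * y ^ 2 + x * δ y := by
    rw [h]
    field_simp
  rw [eq_div_iff (pow_ne_zero 2 hy)]
  linear_combination -h2

end PLDS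

open Polynomial in
/-- Let `K` be a differential field of characteristic zero and `t` a primitive
generator over `K`, with `F = K(t)`.  If `f ∈ K(t)` is `t`-proper and is a
logarithmic derivative (`f = g′/g` for some nonzero `g ∈ K(t)`), then `f` is
`t`-simple, i.e. its denominator is squarefree. -/
theorem proper_logarithmic_derivative_is_simple (F : Type*) [Field F] [CharZero F]
    (δ : F → F)
    (hδadd : ∀ a b : F, δ (a + b) = δ a + δ b)
    (hδmul : ∀ a b : F, δ (a * b) = δ a * b + a * δ b)
    (K : Subfield F) (hK : ∀ a ∈ K, δ a ∈ K)
    (t : F) (htr : Transcendental ↥K t) (ht : δ t ∈ K)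
    (hgen : Subfield.closure ((K : Set F) ∪ {t}) = ⊤)
    (hnewconst : ∀ c : F, δ c = 0 → c ∈ K)
    (f : F)
    (hproper : ∃ p q : Polynomial ↥K, q ≠ 0 ∧ p.degree < q.degree ∧
      f = Polynomial.aeval t p / Polynomial.aeval t q)
    (hlog : ∃ g : F, g ≠ 0 ∧ f = δ g / g) :
    ∃ p q : Polynomial ↥K, q ≠ 0 ∧ p.degree < q.degree ∧ Squarefree q ∧
      f = Polynomial.aeval t p / Polynomial.aeval t q := by
  classical
  obtain ⟨P, Q, hQ0, hPQdeg, hfPQ⟩ := hproper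
  obtain ⟨g, hg0, hfg⟩ := hlog
  have hanz : ∀ {p : Polynomial ↥K}, p ≠ 0 → aeval t p ≠ 0 := fun hp => PLDS.aeval_ne htr hp
  have hainj := transcendental_iff_injective.mp htr
  obtain ⟨D', hD'⟩ : ∃ D' : Polynomial ↥K → Polynomial ↥K, D' = PLDS.D hδadd hK ⟨δ t, ht⟩ :=
    ⟨_, rfl⟩
  have haD : ∀ p, aeval t (D' p) = δ (aeval t p) := by
    rw [hD']; exact PLDS.aeval_D hδadd hδmul hK ht
  have hDmul : ∀ p q, D' (p * q) = D' p * q + p * D' q := by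
    rw [hD']; exact PLDS.D_mul hδadd hδmul hK htr ht
  have hDdeg : ∀ {M : Polynomial ↥K}, M.Monic → (D' M).degree < M.degree := by
    rw [hD']; intro M hM; exact PLDS.degree_D_lt hδadd hδmul hK _ hM
  -- step 1 : write g as a ratio of polynomials in t
  have hgmem : g ∈ IntermediateField.adjoin ↥K {t} := by
    have hmem : g ∈ Subfield.closure ((K : Set F) ∪ {t}) := by
      rw [hgen]; exact Subfield.mem_top g
    have h2 : Subfield.closure ((K : Set F) ∪ {t}) ≤
        (IntermediateField.adjoin ↥K {t}).toSubfield := by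
      apply Subfield.closure_le.mpr
      rintro y (hy | hy)
      · exact (IntermediateField.adjoin ↥K {t}).algebraMap_mem ⟨y, hy⟩
      · simp only [Set.mem_singleton_iff] at hy
        rw [hy]
        exact IntermediateField.mem_adjoin_simple_self ↥K t
    exact h2 hmem
  obtain ⟨A, B, hgAB⟩ := (IntermediateField.mem_adjoin_simple_iff ↥K g).mp hgmem
  have haB0 : aeval t B ≠ 0 := by
    intro h; apply hg0; rw [hgAB, h, div_zero]
  have haA0 : aeval t A ≠ 0 := by
    intro h; apply hg0; rw [hgAB, h, zero_div]
  have hApoly : A ≠ 0 := by rintro rfl; exact haA0 (map_zero _)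
  have hBpoly : B ≠ 0 := by rintro rfl; exact haB0 (map_zero _)
  -- step 2 : logarithmic derivative of a nonzero polynomial is K-constant + simple
  have key : ∀ R : Polynomial ↥K, R ≠ 0 → ∃ (s r : Polynomial ↥K) (kk : F), kk ∈ K ∧ r ≠ 0 ∧
      Squarefree r ∧ s.degree < r.degree ∧
      δ (aeval t R) / aeval t R = kk + aeval t s / aeval t r := by
    intro R hR
    obtain ⟨M, hM⟩ : ∃ M : Polynomial ↥K, M = R * C (R.leadingCoeff)⁻¹ := ⟨_, rfl⟩
    have hMm : M.Monic := hM ▸ monic_mul_leadingCoeff_inv hR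
    have hc0 : R.leadingCoeff ≠ 0 := leadingCoeff_ne_zero.mpr hR
    have hcF : ((R.leadingCoeff : ↥K) : F) ≠ 0 := fun h => hc0 (Subtype.ext h)
    have hRM : R = M * C R.leadingCoeff := by
      rw [hM, mul_assoc, ← C_mul, inv_mul_cancel₀ hc0, C_1, mul_one]
    obtain ⟨s, r, hr0, hsq, hsdeg, heq⟩ :=
      PLDS.main_lemma D' hDmul hDdeg M.natDegree M hMm le_rfl
    refine ⟨s, r, δ ↑R.leadingCoeff / ↑R.leadingCoeff,
      K.div_mem (hK _ (R.leadingCoeff).2) (R.leadingCoeff).2, hr0, hsq, hsdeg, ?_⟩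
    have haM : aeval t M ≠ 0 := hanz hMm.ne_zero
    have h1 : aeval t R = aeval t M * ↑R.leadingCoeff := by
      conv_lhs => rw [hRM]
      rw [map_mul, aeval_C]; rfl
    have h3 : aeval t (D' M) * aeval t r = aeval t M * aeval t s := by
      rw [← map_mul, ← map_mul, heq]
    have h4 : δ (aeval t M) / aeval t M = aeval t s / aeval t r := by
      rw [← haD, div_eq_div_iff haM (hanz hr0)]
      linear_combination h3
    have h5 : δ (aeval t R) / aeval t R
        = δ (aeval t M) / aeval t M + δ ↑R.leadingCoeff / ↑R.leadingCoeff := by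
      rw [h1, hδmul, div_add_div _ _ haM hcF, div_eq_div_iff (mul_ne_zero haM hcF)
        (mul_ne_zero haM hcF)]
    rw [h5, h4]
    exact add_comm _ _
  obtain ⟨sA, rA, kA, hkA, hrA0, hsqA, hdegA, hEA⟩ := key A hApoly
  obtain ⟨sB, rB, kB, hkB, hrB0, hsqB, hdegB, hEB⟩ := key B hBpoly
  -- step 3 : f = (kA - kB) + (sA/rA - sB/rB)
  have hfsplit : f = δ (aeval t A) / aeval t A - δ (aeval t B) / aeval t B := by
    rw [hfg, hgAB, PLDS.d_div hδmul _ _ haB0]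
    field_simp
  -- step 4 : combine the two simple fractions
  obtain ⟨d0, hd0⟩ : ∃ d0, EuclideanDomain.gcd rA rB = d0 := ⟨_, rfl⟩
  obtain ⟨eA, heA⟩ : d0 ∣ rA := hd0 ▸ EuclideanDomain.gcd_dvd_left rA rB
  obtain ⟨eB, heB⟩ : d0 ∣ rB := hd0 ▸ EuclideanDomain.gcd_dvd_right rA rB
  have heA0 : eA ≠ 0 := by rintro rfl; rw [mul_zero] at heA; exact hrA0 heA
  have heB0 : eB ≠ 0 := by rintro rfl; rw [mul_zero] at heB; exact hrB0 heB
  have hrel : IsRelPrime rA eB := by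
    intro x hx1 hx2
    obtain ⟨c, hc⟩ := hx2
    have hxrB : x ∣ rB := ⟨d0 * c, by rw [heB, hc]; ring⟩
    have hxd : x ∣ d0 := hd0 ▸ EuclideanDomain.dvd_gcd hx1 hxrB
    exact hsqB x (by rw [heB]; exact mul_dvd_mul hxd ⟨c, hc⟩)
  have hsqeB : Squarefree eB := hsqB.squarefree_of_dvd ⟨d0, by rw [heB]; ring⟩
  have hsql : Squarefree (rA * eB) := squarefree_mul_iff.mpr ⟨hrel, hsqA, hsqeB⟩
  obtain ⟨l, hl⟩ : ∃ l : Polynomial ↥K, l = rA * eB := ⟨_, rfl⟩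
  have hsqll : Squarefree l := hl ▸ hsql
  have hl0 : l ≠ 0 := hl ▸ mul_ne_zero hrA0 heB0
  have hkey : l = eA * rB := by rw [hl, heA, heB]; ring
  obtain ⟨u, hu⟩ : ∃ u : Polynomial ↥K, u = sA * eB - sB * eA := ⟨_, rfl⟩
  have hae : aeval t rA * aeval t eB = aeval t eA * aeval t rB := by
    rw [← map_mul, ← map_mul, ← hl, hkey]
  have hldeg : l.degree = rA.degree + eB.degree := by rw [hl, degree_mul]
  have hldeg2 : l.degree = eA.degree + rB.degree := by rw [hkey, degree_mul]
  have hfrac : aeval t sA / aeval t rA - aeval t sB / aeval t rB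
      = aeval t u / aeval t l := by
    rw [hu, hl, map_sub, map_mul, map_mul, map_mul]
    rw [div_sub_div _ _ (hanz hrA0) (hanz hrB0),
      div_eq_div_iff (mul_ne_zero (hanz hrA0) (hanz hrB0))
        (mul_ne_zero (hanz hrA0) (hanz heB0))]
    linear_combination (-(aeval t sB) * (aeval t rA)) * hae
  have hdegu : u.degree < l.degree := by
    rw [hu]
    apply lt_of_le_of_lt (degree_sub_le _ _)
    apply max_lt
    · rw [degree_mul, hldeg]
      exact WithBot.add_lt_add_right (fun h => heB0 (degree_eq_bot.mp h)) hdegA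
    · rw [degree_mul, hldeg2]
      calc sB.degree + eA.degree < rB.degree + eA.degree :=
            WithBot.add_lt_add_right (fun h => heA0 (degree_eq_bot.mp h)) hdegB
        _ = eA.degree + rB.degree := add_comm _ _
  have hf2 : f = (kA - kB) + aeval t u / aeval t l := by
    rw [hfsplit, hEA, hEB, ← hfrac]
    ring
  -- step 5 : the constant must vanish since f is proper
  have hkmem : kA - kB ∈ K := K.sub_mem hkA hkB
  obtain ⟨k', hk'⟩ : ∃ k' : ↥K, (k' : F) = kA - kB := ⟨⟨_, hkmem⟩, rfl⟩
  have hQne := hanz hQ0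
  have hlne := hanz hl0
  have h5 : aeval t P / aeval t Q = (k' : F) + aeval t u / aeval t l := by
    rw [hk', ← hf2, ← hfPQ]
  have hPident : P * l - u * Q = C k' * (Q * l) := by
    apply hainj
    rw [map_sub, map_mul, map_mul, map_mul, map_mul, aeval_C]
    have halg : (algebraMap ↥K F) k' = (k' : F) := rfl
    rw [halg]
    field_simp at h5
    linear_combination h5
  by_cases hk0 : k' = 0
  · have hPl : P * l = u * Q := by
      rw [hk0, map_zero, zero_mul, sub_eq_zero] at hPident
      exact hPident
    refine ⟨u, l, hl0, hdegu, hsqll, ?_⟩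
    rw [hfPQ, div_eq_div_iff hQne hlne, ← map_mul, ← map_mul]
    exact congrArg _ hPl
  · exfalso
    have hdeg1 : (P * l - u * Q).degree < (Q * l).degree := by
      apply lt_of_le_of_lt (degree_sub_le _ _)
      apply max_lt
      · rw [degree_mul, degree_mul]
        exact WithBot.add_lt_add_right (fun h => hl0 (degree_eq_bot.mp h)) hPQdeg
      · rw [degree_mul, degree_mul]
        calc u.degree + Q.degree < l.degree + Q.degree :=
              WithBot.add_lt_add_right (fun h => hQ0 (degree_eq_bot.mp h)) hdegu
          _ = Q.degree + l.degree := add_comm _ _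
    rw [hPident, degree_mul, degree_C hk0, zero_add] at hdeg1
    exact lt_irrefl _ hdeg1
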